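/- Let p = (p_1, ..., p_n) be a probability distribution with all components strictly positive and let 1 ≤ m < n. Then there exists a contiguous m-aggregation q = (q_1, ..., q_m) of p and an integer 0 ≤ k* < m such that, after reordering the components of q in non-increasing order: (i) q_1, ..., q_{k*} are all larger than 2/m and coincide with the k* largest components of p, and (ii) q_{k*+1}, ..., q_m are all at most 2/m. -/

import Mathlib

/-- `q` (given by its first `m` values) is a contiguous `m`-aggregation of the first
`n` values of `p`. -/
def IsContigAgg (n m : ℕ) (p q : ℕ → ℝ) : Prop :=
  ∃ ind : ℕ → ℕ, ind 0 = 0 ∧ ind m = n ∧ (∀ j < m, ind j < ind (j + 1)) ∧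
    ∀ j < m, q j = ∑ k ∈ Finset.Ico (ind j) (ind (j + 1)), p k


private def Good (p : ℕ → ℝ) (T : ℝ) (x y : ℕ) : Prop :=
  ((∀ k ∈ Finset.Ico x y, p k ≤ T) ∧ ∑ k ∈ Finset.Ico x y, p k ≤ T) ∨ (y = x + 1 ∧ T < p x)

private def Parts (p : ℕ → ℝ) (T : ℝ) (r a b : ℕ) : Prop :=
  ∃ ind : ℕ → ℕ, ind 0 = a ∧ ind r = b ∧ (∀ j < r, ind j < ind (j + 1)) ∧
    ∀ j < r, Good p T (ind j) (ind (j + 1))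

private lemma parts_cons {p : ℕ → ℝ} {T : ℝ} {r a i b : ℕ} (hai : a < i)
    (hg : Good p T a i) (hP : Parts p T r i b) : Parts p T (r + 1) a b := by
  obtain ⟨ind, h0, hr, hlt, hgood⟩ := hP
  refine ⟨fun j => if j = 0 then a else ind (j - 1), by simp, by simp [hr], ?_, ?_⟩
  · intro j hj
    match j with
    | 0 => simpa [h0] using hai
    | j + 1 => simpa using hlt j (by omega)
  · intro j hj
    match j with
    | 0 => simpa [h0] using hg
    | j + 1 => simpa using hgood j (by omega)

private lemma good_single (p : ℕ → ℝ) (T : ℝ) (k : ℕ) : Good p T k (k + 1) := by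
  by_cases h : p k ≤ T
  · left
    constructor
    · intro j hj
      rw [Finset.mem_Ico] at hj
      have : j = k := by omega
      subst this; exact h
    · rw [Nat.Ico_succ_singleton, Finset.sum_singleton]; exact h
  · right; exact ⟨rfl, lt_of_not_ge h⟩

private lemma parts_singletons (p : ℕ → ℝ) (T : ℝ) : ∀ r a, Parts p T r a (a + r) := by
  intro r
  induction r with
  | zero => exact fun a => ⟨fun _ => a, rfl, rfl, by omega, by omega⟩
  | succ r ih =>
    intro a
    have h := parts_cons (show a < a + 1 by omega) (good_single p T a) (ih (a + 1))
    have : a + 1 + r = a + (r + 1) := by omega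
    rwa [this] at h

private lemma parts_aux (p : ℕ → ℝ) (ε : ℝ) (hε : 0 < ε) :
    ∀ r : ℕ, 1 ≤ r → ∀ a b : ℕ, a + r ≤ b → (∀ k, a ≤ k → k < b → 0 < p k) →
    (∑ k ∈ Finset.Ico a b, min (p k) (2 * ε)) ≤ (r : ℝ) * ε → Parts p (2 * ε) r a b := by
  intro r
  induction r using Nat.strong_induction_on with
  | _ r IH =>
  intro hr a b hab hpos hW
  classical
  -- basic facts about partial sums
  set S : ℕ → ℝ := fun i => ∑ k ∈ Finset.Ico a i, p k with hS
  have hSsplit : ∀ x, a ≤ x → x ≤ b → S x + ∑ k ∈ Finset.Ico x b, p k = S b := by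
    intro x h1 h2; exact Finset.sum_Ico_consecutive _ h1 h2
  have hSnonneg : ∀ x, x ≤ b → 0 ≤ S x := by
    intro x hx
    exact Finset.sum_nonneg fun k hk => by
      rw [Finset.mem_Ico] at hk; exact (hpos k hk.1 (lt_of_lt_of_le hk.2 hx)).le
  have hSsucc : ∀ x, a ≤ x → S (x + 1) = S x + p x := by
    intro x hx; exact Finset.sum_Ico_succ_top hx _
  have hSmono : ∀ x y, a ≤ x → x ≤ y → y ≤ b → S x ≤ S y := by
    intro x y h1 h2 h3
    have := Finset.sum_Ico_consecutive p h1 h2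
    have hnn : (0:ℝ) ≤ ∑ k ∈ Finset.Ico x y, p k :=
      Finset.sum_nonneg fun k hk => by
        rw [Finset.mem_Ico] at hk
        exact (hpos k (le_trans h1 hk.1) (lt_of_lt_of_le hk.2 h3)).le
    simp only [hS]; linarith [this]
  have hSpos : ∀ x, a < x → x ≤ b → 0 < S x := by
    intro x h1 h2
    have : S (a+1) ≤ S x := hSmono (a+1) x (by omega) (by omega) h2
    have : S a + p a ≤ S x := by rwa [← hSsucc a le_rfl]
    have hpa := hpos a le_rfl (by omega)
    have hSa : S a = 0 := by simp [hS]
    linarith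
  have hmin_eq : ∀ x y, y ≤ b → (∀ k ∈ Finset.Ico x y, p k ≤ 2*ε) →
      ∑ k ∈ Finset.Ico x y, min (p k) (2*ε) = ∑ k ∈ Finset.Ico x y, p k := by
    intro x y _ h
    exact Finset.sum_congr rfl fun k hk => min_eq_left (h k hk)
  have hWsplit : ∀ x, a ≤ x → x ≤ b →
      (∑ k ∈ Finset.Ico a x, min (p k) (2*ε)) + (∑ k ∈ Finset.Ico x b, min (p k) (2*ε))
        = ∑ k ∈ Finset.Ico a b, min (p k) (2*ε) := by
    intro x h1 h2; exact Finset.sum_Ico_consecutive _ h1 h2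
  have hminnn : ∀ x y, a ≤ x → y ≤ b → (0:ℝ) ≤ ∑ k ∈ Finset.Ico x y, min (p k) (2*ε) := by
    intro x y hx hy
    refine Finset.sum_nonneg fun k hk => ?_
    rw [Finset.mem_Ico] at hk
    exact le_min (hpos k (le_trans hx hk.1) (lt_of_lt_of_le hk.2 hy)).le (by positivity)
  rcases Nat.lt_or_ge r 2 with h2 | h2
  · -- r = 1
    have hr1 : r = 1 := by omega
    subst hr1
    have hallsmall : ∀ k ∈ Finset.Ico a b, p k ≤ 2*ε := by
      intro k hk
      rw [Finset.mem_Ico] at hk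
      by_contra hgt
      push_neg at hgt
      have h1 : (2*ε) ≤ ∑ k ∈ Finset.Ico a b, min (p k) (2*ε) := by
        have hmem : k ∈ Finset.Ico a b := Finset.mem_Ico.mpr hk
        have := Finset.single_le_sum (f := fun k => min (p k) (2*ε))
          (fun i hi => by
            rw [Finset.mem_Ico] at hi
            exact le_min (hpos i hi.1 hi.2).le (by positivity)) hmem
        simpa [min_eq_right hgt.le] using this
      push_cast at hW
      linarith
    refine ⟨fun j => if j = 0 then a else b, by simp, by simp, ?_, ?_⟩
    · intro j hj
      have hj0 : j = 0 := by omega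
      subst hj0
      simpa using by omega
    · intro j hj
      have hj0 : j = 0 := by omega
      subst hj0
      show Good p (2*ε) a b
      left
      refine ⟨hallsmall, ?_⟩
      rw [← hmin_eq a b le_rfl hallsmall]
      push_cast at hW
      linarith
  · -- r ≥ 2
    rcases eq_or_lt_of_le hab with hEq | hlt'
    · have := parts_singletons p (2*ε) r a
      rwa [hEq] at this
    · set c := b - (r - 1) with hc
      have hc1 : a + 1 < c := by omega
      have hc2 : c < b := by omega
      have hex : ∃ i, a < i ∧ (i = c ∨ ε ≤ S i ∨ 2*ε < S i + p i) := ⟨c, by omega, Or.inl rfl⟩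
      obtain ⟨i, ⟨hia, hidisj⟩, hmin'⟩ :
          ∃ i, (a < i ∧ (i = c ∨ ε ≤ S i ∨ 2*ε < S i + p i)) ∧
            ∀ j < i, ¬(a < j ∧ (j = c ∨ ε ≤ S j ∨ 2*ε < S j + p j)) := by
        classical
        exact ⟨Nat.find hex, Nat.find_spec hex, fun j hj => Nat.find_min hex hj⟩
      have hic : i ≤ c := by
        by_contra hcon
        exact hmin' c (by omega) ⟨by omega, Or.inl rfl⟩
      have hib : i < b := lt_of_le_of_lt hic hc2
      have hnot : ∀ j, a < j → j < i → S j < ε ∧ S j + p j ≤ 2*ε := by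
        intro j h1 h3
        have h4 := hmin' j h3
        push_neg at h4
        obtain ⟨-, h5, h6⟩ := h4 h1
        exact ⟨h5, h6⟩
      have hSa : S a = 0 := by simp [hS]
      have helem : ∀ x, x ≤ b → ∀ k ∈ Finset.Ico a x, p k ≤ S x := by
        intro x hx k hk
        rw [Finset.mem_Ico] at hk
        have h1 : S (k+1) ≤ S x := hSmono (k+1) x (by omega) (by omega) hx
        have h2 : S (k+1) = S k + p k := hSsucc k hk.1
        have h3 : 0 ≤ S k := hSnonneg k (by omega)
        linarith
      by_cases hQ1 : ε ≤ S i
      · -- case β : part [a,i) then recurse with r-1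
        have hgood : Good p (2*ε) a i ∧ ε ≤ ∑ k ∈ Finset.Ico a i, min (p k) (2*ε) := by
          by_cases hone : i = a + 1
          · subst hone
            have hpaeq : S (a+1) = p a := by rw [hSsucc a le_rfl, hSa]; ring
            by_cases hpa : p a ≤ 2*ε
            · constructor
              · left
                constructor
                · intro k hk
                  rw [Finset.mem_Ico] at hk
                  have : k = a := by omega
                  subst this; exact hpa
                · rw [Nat.Ico_succ_singleton, Finset.sum_singleton]; exact hpa
              · rw [Nat.Ico_succ_singleton, Finset.sum_singleton]
                refine le_min ?_ (by linarith)
                rw [← hpaeq]; exact hQ1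
            · constructor
              · right; exact ⟨rfl, lt_of_not_ge hpa⟩
              · rw [Nat.Ico_succ_singleton, Finset.sum_singleton,
                  min_eq_right (le_of_not_ge hpa)]
                linarith
          · have h4 := hnot (i-1) (by omega) (by omega)
            have h5 : S i = S (i-1) + p (i-1) := by
              have := hSsucc (i-1) (by omega)
              rwa [show i - 1 + 1 = i by omega] at this
            have h3 : S i ≤ 2*ε := by linarith [h4.2]
            have helems : ∀ k ∈ Finset.Ico a i, p k ≤ 2*ε :=
              fun k hk => (helem i hib.le k hk).trans h3
            constructor
            · left
              refine ⟨helems, ?_⟩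
              simpa [hS] using h3
            · rw [hmin_eq a i hib.le helems]
              simpa [hS] using hQ1
        obtain ⟨hgood1, hWpart⟩ := hgood
        have hrec : Parts p (2*ε) (r-1) i b := by
          apply IH (r-1) (by omega) (by omega) i b (by omega)
            (fun k h1 h2 => hpos k (by omega) h2)
          have hsplit := hWsplit i (by omega) hib.le
          have hcast : ((r-1 : ℕ) : ℝ) = (r:ℝ) - 1 := by
            push_cast [Nat.cast_sub (by omega : 1 ≤ r)]; ring
          rw [hcast]
          linarith
        have hcomb := parts_cons hia hgood1 hrec
        rwa [show r - 1 + 1 = r by omega] at hcomb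
      · by_cases hQ2 : 2*ε < S i + p i
        · -- case γ : part [a,i), singleton {i}, recurse with r-2
          push_neg at hQ1
          have hSi2 : S i ≤ 2*ε := by linarith
          have helems : ∀ k ∈ Finset.Ico a i, p k ≤ 2*ε :=
            fun k hk => (helem i hib.le k hk).trans hSi2
          have hgood1 : Good p (2*ε) a i :=
            Or.inl ⟨helems, by simpa [hS] using hSi2⟩
          have hWai : ∑ k ∈ Finset.Ico a i, min (p k) (2*ε) = S i :=
            (hmin_eq a i hib.le helems).trans (by simp [hS])
          have hWai1 : ∑ k ∈ Finset.Ico a (i+1), min (p k) (2*ε) = S i + min (p i) (2*ε) := by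
            rw [Finset.sum_Ico_succ_top (by omega : a ≤ i), hWai]
          have hremove : 2*ε < ∑ k ∈ Finset.Ico a (i+1), min (p k) (2*ε) := by
            rw [hWai1]
            rcases le_total (p i) (2*ε) with h | h
            · rw [min_eq_left h]; exact hQ2
            · rw [min_eq_right h]
              have := hSpos i (by omega) (by omega)
              linarith
          have hsplit := hWsplit (i+1) (by omega) (by omega)
          have hr3 : 3 ≤ r := by
            by_contra hcon
            have hr2 : (r:ℝ) = 2 := by
              have : r = 2 := by omega
              rw [this]; norm_num
            rw [hr2] at hW
            have hrest := hminnn (i+1) b (by omega) le_rfl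
            linarith
          have hrec : Parts p (2*ε) (r-2) (i+1) b := by
            apply IH (r-2) (by omega) (by omega) (i+1) b (by omega)
              (fun k h1 h2 => hpos k (by omega) h2)
            have hcast : ((r-2 : ℕ) : ℝ) = (r:ℝ) - 2 := by
              push_cast [Nat.cast_sub (by omega : 2 ≤ r)]; ring
            rw [hcast]
            linarith
          have hcomb := parts_cons hia hgood1
            (parts_cons (by omega) (good_single p (2*ε) i) hrec)
          rwa [show r - 2 + 1 + 1 = r by omega] at hcomb
        · -- case α : i = c, cap binds; part [a,c) then singletons
          have hieqc : i = c := by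
            rcases hidisj with h | h
            · exact h
            · rcases h with h | h
              · exact absurd h hQ1
              · exact absurd h hQ2
          push_neg at hQ1
          have hSc2 : S i ≤ 2*ε := by linarith
          have hgood1 : Good p (2*ε) a i :=
            Or.inl ⟨fun k hk => (helem i hib.le k hk).trans hSc2, by simpa [hS] using hSc2⟩
          have hsing := parts_singletons p (2*ε) (r-1) i
          rw [show i + (r-1) = b by omega] at hsing
          have hcomb := parts_cons hia hgood1 hsing
          rwa [show r - 1 + 1 = r by omega] at hcomb

private noncomputable def rsort (M : Multiset ℝ) : List ℝ := (Multiset.sort M (· ≤ ·)).reverse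

private lemma rsort_coe (M : Multiset ℝ) : (↑(rsort M) : Multiset ℝ) = M := by
  rw [rsort, Multiset.coe_reverse, Multiset.sort_eq]

private lemma rsort_length (M : Multiset ℝ) : (rsort M).length = Multiset.card M := by
  rw [rsort, List.length_reverse, Multiset.length_sort]

private lemma rsort_sorted (M : Multiset ℝ) : (rsort M).Pairwise (fun x y => y ≤ x) := by
  rw [rsort, List.pairwise_reverse]
  exact Multiset.pairwise_sort M _

private lemma rsort_mem {M : Multiset ℝ} {x : ℝ} (h : x ∈ rsort M) : x ∈ M := by
  rw [← rsort_coe M]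
  exact_mod_cast h

private lemma map_getD_range (L : List ℝ) (d : ℝ) :
    List.map (fun j => L.getD j d) (List.range L.length) = L := by
  apply List.ext_getElem
  · simp
  · intro i h1 h2
    simp [List.getD, List.getElem?_eq_getElem h2]

private lemma sorted_enum (B Sm : Multiset ℝ) (t : ℝ)
    (hB : ∀ x ∈ B, t < x) (hS : ∀ x ∈ Sm, x ≤ t) :
    ∃ f : ℕ → ℝ,
      (Multiset.map f (Finset.range (Multiset.card B + Multiset.card Sm)).val = B + Sm) ∧
      (∀ a b : ℕ, a ≤ b → b < Multiset.card B + Multiset.card Sm → f b ≤ f a) ∧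
      (∀ j < Multiset.card B, f j = (rsort B).getD j 0) ∧
      (∀ j < Multiset.card B, t < f j) ∧
      (∀ j, Multiset.card B ≤ j → j < Multiset.card B + Multiset.card Sm → f j ≤ t) := by
  set L : List ℝ := rsort B ++ rsort Sm with hL
  have hlen : L.length = Multiset.card B + Multiset.card Sm := by
    rw [hL, List.length_append, rsort_length, rsort_length]
  have hLco : (↑L : Multiset ℝ) = B + Sm := by
    rw [hL]
    have h : (↑(rsort B ++ rsort Sm) : Multiset ℝ) = (↑(rsort B) : Multiset ℝ) + ↑(rsort Sm) := rfl
    rw [h, rsort_coe, rsort_coe]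
  have hLsort : L.Pairwise (fun x y => y ≤ x) := by
    rw [hL, List.pairwise_append]
    refine ⟨rsort_sorted B, rsort_sorted Sm, fun a ha b hb => ?_⟩
    exact le_of_lt (lt_of_le_of_lt (hS b (rsort_mem hb)) (hB a (rsort_mem ha)))
  refine ⟨fun j => L.getD j 0, ?_, ?_, ?_, ?_, ?_⟩
  · have : (Finset.range (Multiset.card B + Multiset.card Sm)).val
        = (↑(List.range L.length) : Multiset ℕ) := by
      rw [hlen]; rfl
    rw [this, Multiset.map_coe, map_getD_range, hLco]
  · intro a b hab hb
    show L.getD b 0 ≤ L.getD a 0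
    rcases eq_or_lt_of_le hab with h | h
    · subst h; exact le_rfl
    · have ha' : a < L.length := by omega
      have hb' : b < L.length := by omega
      rw [List.getD_eq_getElem L 0 ha', List.getD_eq_getElem L 0 hb']
      have := hLsort.rel_get_of_lt (a := ⟨a, ha'⟩) (b := ⟨b, hb'⟩) h
      simpa using this
  · intro j hj
    show L.getD j 0 = _
    rw [hL]
    exact List.getD_append _ _ _ _ (by rw [rsort_length]; exact hj)
  · intro j hj
    show t < L.getD j 0
    have hj' : j < L.length := by omega
    rw [List.getD_eq_getElem L 0 hj']
    have hmem : L[j] ∈ L := List.getElem_mem hj'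
    have : L[j] ∈ B + Sm := by rw [← hLco]; exact_mod_cast hmem
    rcases Multiset.mem_add.mp this with h | h
    · exact hB _ h
    · -- element of the small block: but index is in big range; use prefix equality instead
      -- fallback: use the prefix charaterization
      have hpref : L.getD j 0 = (rsort B).getD j 0 := by
        rw [hL]; exact List.getD_append _ _ _ _ (by rw [rsort_length]; exact hj)
      have hj'' : j < (rsort B).length := by rw [rsort_length]; exact hj
      rw [List.getD_eq_getElem L 0 hj'] at hpref
      rw [hpref, List.getD_eq_getElem _ 0 hj'']
      exact hB _ (rsort_mem (List.getElem_mem hj''))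
  · intro j hj1 hj2
    show L.getD j 0 ≤ t
    rw [hL, List.getD_append_right _ _ _ _ (by rw [rsort_length]; exact hj1)]
    have hidx : j - (rsort B).length < (rsort Sm).length := by
      rw [rsort_length, rsort_length]; omega
    rw [List.getD_eq_getElem _ 0 hidx]
    exact hS _ (rsort_mem (List.getElem_mem hidx))

/-- There exists a contiguous `m`-aggregation `q` of `p` and `k* < m`
such that, after sorting `q` in non-increasing order, the first `k*` components
exceed `2/m` and coincide with the `k*` largest components of `p`, while all the
remaining components are at most `2/m`. -/
theorem greedy_output_structure
    (n m : ℕ) (hm : 1 ≤ m) (hmn : m < n)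
    (p : ℕ → ℝ) (hp : ∀ k < n, 0 < p k)
    (hsum : ∑ k ∈ Finset.range n, p k = 1) :
    ∃ (q : ℕ → ℝ) (kstar : ℕ), IsContigAgg n m p q ∧ kstar < m ∧
      ∃ qs : ℕ → ℝ,
        Multiset.map qs (Finset.range m).val = Multiset.map q (Finset.range m).val ∧
        (∀ a b : ℕ, a ≤ b → b < m → qs b ≤ qs a) ∧
        (∃ ps : ℕ → ℝ,
          Multiset.map ps (Finset.range n).val = Multiset.map p (Finset.range n).val ∧
          (∀ a b : ℕ, a ≤ b → b < n → ps b ≤ ps a) ∧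
          ∀ j < kstar, qs j = ps j) ∧
        (∀ j < kstar, 2 / (m : ℝ) < qs j) ∧
        (∀ j, kstar ≤ j → j < m → qs j ≤ 2 / (m : ℝ)) := by
  classical
  have hm0 : (0:ℝ) < (m:ℝ) := by exact_mod_cast hm
  set T : ℝ := 2 / (m : ℝ) with hTdef
  set ε : ℝ := 1 / (m : ℝ) with hεdef
  have hε : 0 < ε := by rw [hεdef]; positivity
  have hT : 2 * ε = T := by rw [hεdef, hTdef]; ring
  -- obtain the greedy partition
  have hparts : Parts p (2*ε) m 0 n := by
    apply parts_aux p ε hε m hm 0 n (by omega) (fun k _ hk => hp k hk)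
    have h1 : ∑ k ∈ Finset.Ico 0 n, min (p k) (2*ε) ≤ ∑ k ∈ Finset.Ico 0 n, p k :=
      Finset.sum_le_sum (fun k _ => min_le_left _ _)
    have h2 : ∑ k ∈ Finset.Ico 0 n, p k = 1 := by
      rw [← Finset.range_eq_Ico]; exact hsum
    have h3 : (m:ℝ) * ε = 1 := by
      rw [hεdef]; field_simp
    linarith
  obtain ⟨ind, hi0, him, hlt, hgood⟩ := hparts
  have hmono : ∀ j j', j ≤ j' → j' ≤ m → ind j ≤ ind j' := by
    intro j j' h1 h2
    induction j' with
    | zero =>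
      have : j = 0 := by omega
      subst this; exact le_rfl
    | succ j' ih =>
      rcases Nat.lt_or_ge j (j'+1) with h | h
      · have ha := hlt j' (by omega)
        have hb := ih (by omega) (by omega)
        omega
      · have : j = j'+1 := by omega
        subst this; exact le_rfl
  have hub : ∀ j, j ≤ m → ind j ≤ n := fun j hj => him ▸ hmono j m hj le_rfl
  set q : ℕ → ℝ := fun j => ∑ k ∈ Finset.Ico (ind j) (ind (j+1)), p k with hq
  have hagg : IsContigAgg n m p q := ⟨ind, hi0, him, hlt, fun j _ => rfl⟩
  -- each part is small or a big singleton
  have hpart : ∀ j < m, q j ≤ T ∨ (ind (j+1) = ind j + 1 ∧ T < p (ind j) ∧ q j = p (ind j)) := by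
    intro j hj
    rcases hgood j hj with ⟨_, h2⟩ | ⟨h1, h2⟩
    · left
      rw [hq, ← hT]; exact h2
    · right
      refine ⟨h1, by rw [← hT]; exact h2, ?_⟩
      rw [hq]
      show ∑ k ∈ Finset.Ico (ind j) (ind (j+1)), p k = p (ind j)
      rw [h1, Nat.Ico_succ_singleton, Finset.sum_singleton]
  -- location of big elements of p
  have hfind : ∀ k, k < n → T < p k → ∃ j, j < m ∧ ind j = k ∧ q j = p k := by
    intro k hk hbig
    obtain ⟨j, hjm, hj1, hj2g⟩ :
        ∃ j, j ≤ m ∧ ind j ≤ k ∧ ∀ j', j < j' → j' ≤ m → ¬ ind j' ≤ k :=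
      ⟨Nat.findGreatest (fun j => ind j ≤ k) m, Nat.findGreatest_le m,
        Nat.findGreatest_spec (P := fun j => ind j ≤ k) (Nat.zero_le m) (by simp [hi0]),
        fun j' h1 h2 => Nat.findGreatest_is_greatest (P := fun j => ind j ≤ k) h1 h2⟩
    have hjlt : j < m := by
      rcases eq_or_lt_of_le hjm with h | h
      · exfalso; rw [h, him] at hj1; omega
      · exact h
    have hj2 : ¬ ind (j+1) ≤ k := hj2g (j+1) (by omega) (by omega)
    rcases hpart j hjlt with h | ⟨h1, h2, h3⟩
    · exfalso
      have hkmem : k ∈ Finset.Ico (ind j) (ind (j+1)) := Finset.mem_Ico.mpr ⟨hj1, by omega⟩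
      have hle : p k ≤ q j := by
        rw [hq]
        show p k ≤ ∑ k ∈ Finset.Ico (ind j) (ind (j+1)), p k
        refine Finset.single_le_sum (fun i hi => ?_) hkmem
        rw [Finset.mem_Ico] at hi
        exact (hp i (lt_of_lt_of_le hi.2 (hub (j+1) (by omega)))).le
      linarith
    · have hkj : k = ind j := by omega
      exact ⟨j, hjlt, hkj.symm, by rw [h3, ← hkj]⟩
  -- big index sets
  set Jbig := (Finset.range m).filter (fun j => T < q j) with hJ
  set Kbig := (Finset.range n).filter (fun k => T < p k) with hK
  have hqbig : ∀ j ∈ Jbig, ind (j+1) = ind j + 1 ∧ T < p (ind j) ∧ q j = p (ind j) := by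
    intro j hj
    rw [hJ, Finset.mem_filter, Finset.mem_range] at hj
    rcases hpart j hj.1 with h | h
    · exact absurd hj.2 (not_lt.mpr h)
    · exact h
  have hinj : Set.InjOn ind ↑Jbig := by
    intro x hx y hy hxy
    simp only [hJ, Finset.coe_filter, Set.mem_setOf_eq, Finset.mem_range] at hx hy
    by_contra hne
    rcases Nat.lt_or_ge x y with h | h
    · have h1 := hlt x hx.1
      have h2 := hmono (x+1) y (by omega) (by omega)
      omega
    · have hyx : y < x := by omega
      have h1 := hlt y hy.1
      have h2 := hmono (y+1) x (by omega) (by omega)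
      omega
  have himg : Jbig.image ind = Kbig := by
    ext k
    constructor
    · intro hk
      rw [Finset.mem_image] at hk
      obtain ⟨j, hjJ, rfl⟩ := hk
      obtain ⟨h1, h2, h3⟩ := hqbig j hjJ
      rw [hJ, Finset.mem_filter, Finset.mem_range] at hjJ
      rw [hK, Finset.mem_filter, Finset.mem_range]
      have : ind j < ind (j+1) := hlt j hjJ.1
      exact ⟨lt_of_lt_of_le this (hub (j+1) (by omega)), h2⟩
    · intro hk
      rw [hK, Finset.mem_filter, Finset.mem_range] at hk
      obtain ⟨j, hjm, hje, hqj⟩ := hfind k hk.1 hk.2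
      rw [Finset.mem_image]
      refine ⟨j, ?_, hje⟩
      rw [hJ, Finset.mem_filter, Finset.mem_range]
      exact ⟨hjm, by rw [hqj]; exact hk.2⟩
  -- multiset decomposition
  have step1 : Multiset.filter (fun x => T < x) (Multiset.map q (Finset.range m).val)
      = Multiset.map q Jbig.val := by
    rw [Multiset.filter_map]
    rfl
  have step2 : Multiset.map q Jbig.val = Multiset.map p (Multiset.map ind Jbig.val) := by
    rw [Multiset.map_map]
    exact Multiset.map_congr rfl (fun j hj => (hqbig j hj).2.2)
  have step3 : Multiset.map ind Jbig.val = Kbig.val := by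
    rw [← Finset.image_val_of_injOn hinj, himg]
  have step1p : Multiset.filter (fun x => T < x) (Multiset.map p (Finset.range n).val)
      = Multiset.map p Kbig.val := by
    rw [Multiset.filter_map]
    rfl
  set B := Multiset.map p Kbig.val with hB
  set kstar := Multiset.card B with hkstar
  have hkKcard : kstar = Kbig.card := by rw [hkstar, hB, Multiset.card_map]; rfl
  have hJKcard : Jbig.card = Kbig.card := by
    rw [← himg, Finset.card_image_of_injOn hinj]
  have hkm : kstar < m := by
    rcases Nat.lt_or_ge Jbig.card m with h | h
    · omega
    · exfalso
      have hJeq : Jbig = Finset.range m := by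
        apply Finset.eq_of_subset_of_card_le (Finset.filter_subset _ _)
        simpa using h
      have hstep : ∀ j, j < m → ind (j+1) = ind j + 1 := by
        intro j hj
        have : j ∈ Jbig := by rw [hJeq]; exact Finset.mem_range.mpr hj
        exact (hqbig j this).1
      have hindj : ∀ j, j ≤ m → ind j = j := by
        intro j hj
        induction j with
        | zero => exact hi0
        | succ j ih => rw [hstep j (by omega), ih (by omega)]
      have := hindj m le_rfl
      omega
  have hBbig : ∀ x ∈ B, T < x := by
    intro x hx
    rw [hB] at hx
    obtain ⟨k, hk, rfl⟩ := Multiset.mem_map.mp hx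
    have : k ∈ Kbig := hk
    rw [hK, Finset.mem_filter] at this
    exact this.2
  set Sq := Multiset.filter (fun x => ¬ T < x) (Multiset.map q (Finset.range m).val) with hSq
  set Sp := Multiset.filter (fun x => ¬ T < x) (Multiset.map p (Finset.range n).val) with hSp
  have hSqsmall : ∀ x ∈ Sq, x ≤ T := by
    intro x hx
    rw [hSq] at hx
    exact not_lt.mp (Multiset.mem_filter.mp hx).2
  have hSpsmall : ∀ x ∈ Sp, x ≤ T := by
    intro x hx
    rw [hSp] at hx
    exact not_lt.mp (Multiset.mem_filter.mp hx).2
  have hq_dec : B + Sq = Multiset.map q (Finset.range m).val := by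
    rw [hB, ← step3, ← step2, ← step1, hSq]
    exact Multiset.filter_add_not _ _
  have hp_dec : B + Sp = Multiset.map p (Finset.range n).val := by
    rw [← step1p, hSp]
    exact Multiset.filter_add_not _ _
  have hcardq : kstar + Multiset.card Sq = m := by
    have := congrArg Multiset.card hq_dec
    simpa [hkstar] using this
  have hcardp : kstar + Multiset.card Sp = n := by
    have := congrArg Multiset.card hp_dec
    simpa [hkstar] using this
  obtain ⟨qs, hqs1, hqs2, hqs3, hqs4, hqs5⟩ := sorted_enum B Sq T hBbig hSqsmall
  obtain ⟨ps, hps1, hps2, hps3, _, _⟩ := sorted_enum B Sp T hBbig hSpsmall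
  rw [← hkstar, hcardq, hq_dec] at hqs1
  rw [← hkstar, hcardq] at hqs2 hqs5
  rw [← hkstar, hcardp, hp_dec] at hps1
  rw [← hkstar, hcardp] at hps2
  rw [← hkstar] at hqs3 hqs4 hps3
  exact ⟨q, kstar, hagg, hkm, qs, hqs1, hqs2,
    ⟨ps, hps1, hps2, fun j hj => (hqs3 j hj).trans (hps3 j hj).symm⟩, hqs4, hqs5⟩
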